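/- arXiv:cs/0412063 — 8 statements merged into one kernel-verified Lean document; each statement's English description precedes it below -/
import Mathlib

section
/- Let M = (Σ, Rᵃ, Rᶜ) be a mixed transition system satisfying the mix condition (MC). Then for every state s ∈ Σ, the pointed mixed transition system (M, s) and the pointed modal transition system ((Σ, Rᵃ ∩ Rᶜ, Rᶜ), s) are refinement-equivalent. -/
/-- A mixed transition system over event set `Act` with state set `σ`:
two transition relations `Ra` (asserted/must) and `Rc` (consistent/may). -/
structure MTS (Act σ : Type) where
  Ra : σ → Act → σ → Prop
  Rc : σ → Act → σ → Prop

namespace MTS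

/-- `M` is a modal transition system iff `Ra ⊆ Rc`. -/
def IsModal {Act σ : Type} (M : MTS Act σ) : Prop :=
  ∀ s α t, M.Ra s α t → M.Rc s α t

/-- `M` is image-finite. -/
def ImageFinite {Act σ : Type} (M : MTS Act σ) : Prop :=
  ∀ (s : σ) (α : Act), {t | M.Ra s α t}.Finite ∧ {t | M.Rc s α t}.Finite

end MTS

/-- A labelled transition system viewed as a mixed transition system `(Σ, R, R)`. -/
def LTS {Act σ : Type} (R : σ → Act → σ → Prop) : MTS Act σ := ⟨R, R⟩

/-- `Q` is a refinement from `M` to `N`. -/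
def IsRefinement {Act σ τ : Type} (M : MTS Act σ) (N : MTS Act τ) (Q : σ → τ → Prop) : Prop :=
  ∀ s t, Q s t → ∀ α : Act,
    (∀ s', M.Ra s α s' → ∃ t', N.Ra t α t' ∧ Q s' t') ∧
    (∀ t', N.Rc t α t' → ∃ s', M.Rc s α s' ∧ Q s' t')

/-- `(M,i) ⪯ (N,j)`: the pointed system `(N,j)` refines `(M,i)`. -/
def Refines {Act σ τ : Type} (M : MTS Act σ) (i : σ) (N : MTS Act τ) (j : τ) : Prop :=
  ∃ Q, IsRefinement M N Q ∧ Q i j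

/-- Modes for the two judgments of the semantics: `a` (asserted), `c` (consistent). -/
inductive RMode where
  | a | c

/-- The dual mode: `¬a = c` and `¬c = a`. -/
def RMode.negm : RMode → RMode
  | .a => .c
  | .c => .a

/-- The transition relation of mode `m`. -/
def MTS.R {Act σ : Type} (M : MTS Act σ) : RMode → σ → Act → σ → Prop
  | .a => M.Ra
  | .c => M.Rc

/-- Formulas of Hennessy–Milner logic over `Act`. -/
inductive HML (Act : Type) where
  | tt
  | neg (φ : HML Act)
  | dia (α : Act) (φ : HML Act)
  | and (φ ψ : HML Act)

/-- Larsen's semantics of Hennessy–Milner logic with two judgments `⊨ᵃ`, `⊨ᶜ`. -/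
def Sat {Act σ : Type} (M : MTS Act σ) : HML Act → RMode → σ → Prop
  | .tt, _, _ => True
  | .neg φ, m, s => ¬ Sat M φ m.negm s
  | .dia α φ, m, s => ∃ s', M.R m s α s' ∧ Sat M φ m s'
  | .and φ ψ, m, s => Sat M φ m s ∧ Sat M ψ m s

namespace HML

/-- `[α]φ = ¬⟨α⟩¬φ`. -/
def box {Act : Type} (α : Act) (φ : HML Act) : HML Act := .neg (.dia α (.neg φ))

/-- `φ ∨ ψ = ¬(¬φ ∧ ¬ψ)`. -/
def orf {Act : Type} (φ ψ : HML Act) : HML Act := .neg (.and (.neg φ) (.neg ψ))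

/-- Finite conjunction (empty conjunction is `tt`). -/
def bigAnd {Act : Type} : List (HML Act) → HML Act
  | [] => .tt
  | φ :: l => .and φ (bigAnd l)

/-- Finite disjunction (empty disjunction is `¬tt`). -/
def bigOr {Act : Type} : List (HML Act) → HML Act
  | [] => .neg .tt
  | φ :: l => orf φ (bigOr l)

/-- Modal depth of an HML formula. -/
def depth {Act : Type} : HML Act → ℕ
  | .tt => 0
  | .neg φ => φ.depth
  | .dia _ φ => 1 + φ.depth
  | .and φ ψ => max φ.depth ψ.depth

end HML

/-- Terms of the process algebra MPA. -/
inductive MPA (Act : Type) where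
  | zero
  | bot
  | prefMust (α : Act) (p : MPA Act)
  | prefMay (α : Act) (p : MPA Act)
  | plus (p q : MPA Act)

namespace MPA

variable {Act : Type} [DecidableEq Act]

/-- Must-successors of an MPA term for event `β` (structural operational semantics). -/
def must : MPA Act → Act → List (MPA Act)
  | .zero, _ => []
  | .bot, _ => []
  | .prefMust α p, β => if β = α then [p] else []
  | .prefMay _ _, _ => []
  | .plus p q, β => p.must β ++ q.must β

/-- All (must or may) successors of an MPA term for event `β`. -/
def may : MPA Act → Act → List (MPA Act)
  | .zero, _ => []
  | .bot, _ => [.bot]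
  | .prefMust α p, β => if β = α then [p] else []
  | .prefMay α p, β => if β = α then [p] else []
  | .plus p q, β => p.may β ++ q.may β

/-- The modal transition system `⟦·⟧` given by the structural operational semantics of MPA:
`Ra` is the set of must-transitions, `Rc` the set of all transitions. -/
def mts : MTS Act (MPA Act) :=
  ⟨fun p α q => q ∈ p.must α, fun p α q => q ∈ p.may α⟩

theorem sizeOf_lt_of_mem_must :
    ∀ (t : MPA Act) (α : Act) (r : MPA Act), r ∈ t.must α → sizeOf r < sizeOf t := by
  intro t
  induction t with
  | zero => intro α r h; simp [must] at h
  | bot => intro α r h; simp [must] at h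
  | prefMust β p ih =>
      intro α r h
      simp only [must] at h
      split at h <;> simp_all
  | prefMay β p ih => intro α r h; simp [must] at h
  | plus p q ihp ihq =>
      intro α r h
      simp only [must, List.mem_append] at h
      rcases h with h | h
      · have := ihp α r h; simp; omega
      · have := ihq α r h; simp; omega

theorem sizeOf_le_of_mem_may :
    ∀ (t : MPA Act) (α : Act) (r : MPA Act), r ∈ t.may α → sizeOf r ≤ sizeOf t := by
  intro t
  induction t with
  | zero => intro α r h; simp [may] at h
  | bot => intro α r h; simp [may] at h; simp [h]
  | prefMust β p ih =>
      intro α r h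
      simp only [may] at h
      split at h <;> simp_all
  | prefMay β p ih =>
      intro α r h
      simp only [may] at h
      split at h <;> simp_all
  | plus p q ihp ihq =>
      intro α r h
      simp only [may, List.mem_append] at h
      rcases h with h | h
      · have := ihp α r h; simp; omega
      · have := ihq α r h; simp; omega

theorem sizeOf_lt_plus_of_mem_may (p q : MPA Act) (α : Act) (r : MPA Act)
    (h : r ∈ (MPA.plus p q).may α) : sizeOf r < sizeOf (MPA.plus p q) := by
  simp only [may, List.mem_append] at h
  rcases h with h | h
  · have := sizeOf_le_of_mem_may p α r h; simp; omega
  · have := sizeOf_le_of_mem_may q α r h; simp; omega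

end MPA

/-- The characteristic Hennessy–Milner formula `φ_p` of an MPA term `p`. -/
noncomputable def charForm {Act : Type} [Fintype Act] [DecidableEq Act] : MPA Act → HML Act
  | .zero =>
      .bigAnd (((Finset.univ : Finset Act).toList).map fun α => .neg (.dia α .tt))
  | .bot => .tt
  | .prefMust α p =>
      .and (.dia α (charForm p)) (.and (HML.box α (charForm p))
        (.bigAnd ((((Finset.univ : Finset Act).toList).filter (fun β => β ≠ α)).map
          fun β => .neg (.dia β .tt))))
  | .prefMay α p =>
      .and (HML.box α (charForm p))
        (.bigAnd ((((Finset.univ : Finset Act).toList).filter (fun β => β ≠ α)).map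
          fun β => .neg (.dia β .tt)))
  | .plus p q =>
      .and
        (.bigAnd (((Finset.univ : Finset Act).toList).flatMap fun α =>
          ((MPA.plus p q).must α).attach.map fun r => HML.dia α (charForm r.1)))
        (.bigAnd (((Finset.univ : Finset Act).toList).map fun α =>
          HML.box α (.bigOr (((MPA.plus p q).may α).attach.map fun r => charForm r.1))))
decreasing_by
  all_goals first
    | exact MPA.sizeOf_lt_of_mem_must _ _ _ r.2
    | exact MPA.sizeOf_lt_plus_of_mem_may _ _ _ _ r.2
    | (simp; omega)
    | simp

/-- The formula `ψ_{w,α,p} = [δ₁]…[δₙ](⟨α⟩φ_p ∨ ¬⟨α⟩φ_p)`; the set `Φ` consists of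
all such formulas. -/
noncomputable def psiForm {Act : Type} [Fintype Act] [DecidableEq Act]
    (w : List Act) (α : Act) (p : MPA Act) : HML Act :=
  w.foldr (fun δ φ => HML.box δ φ)
    (HML.orf (.dia α (charForm p)) (.neg (.dia α (charForm p))))

/-- `Rᶜ`-reachability in a mixed transition system. -/
def MTS.ReachC {Act σ : Type} (M : MTS Act σ) : σ → σ → Prop :=
  Relation.ReflTransGen (fun s t => ∃ α, M.Rc s α t)
/-- `M` satisfies the mix condition (MC). -/
def MixCondition {Act σ : Type} (M : MTS Act σ) : Prop :=
  ∀ s (α : Act) s', M.Ra s α s' →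
    ∃ s'', (M.Ra s α s'' ∧ M.Rc s α s'') ∧ Refines M s' M s''

theorem refines_refl_aux {Act σ : Type} (M : MTS Act σ) (s : σ) : Refines M s M s :=
  ⟨Eq, fun a b hab α => by subst hab; exact ⟨fun s' h => ⟨s', h, rfl⟩, fun t' h => ⟨t', h, rfl⟩⟩,
    rfl⟩

theorem refines_isRefinement_aux {Act σ : Type} (M : MTS Act σ) :
    IsRefinement M M (fun a b => Refines M a M b) := by
  rintro a b ⟨Q, hQ, hab⟩ α
  constructor
  · intro s' h
    obtain ⟨t', h1, h2⟩ := (hQ a b hab α).1 s' h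
    exact ⟨t', h1, Q, hQ, h2⟩
  · intro t' h
    obtain ⟨s', h1, h2⟩ := (hQ a b hab α).2 t' h
    exact ⟨s', h1, Q, hQ, h2⟩

theorem refines_trans_aux {Act σ : Type} (M : MTS Act σ) {a b c : σ}
    (h1 : Refines M a M b) (h2 : Refines M b M c) : Refines M a M c := by
  refine ⟨fun x z => ∃ y, Refines M x M y ∧ Refines M y M z, ?_, b, h1, h2⟩
  rintro x z ⟨y, hxy, hyz⟩ α
  constructor
  · intro x' hx'
    obtain ⟨y', hy', hxy'⟩ := (refines_isRefinement_aux M x y hxy α).1 x' hx'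
    obtain ⟨z', hz', hyz'⟩ := (refines_isRefinement_aux M y z hyz α).1 y' hy'
    exact ⟨z', hz', y', hxy', hyz'⟩
  · intro z' hz'
    obtain ⟨y', hy', hyz'⟩ := (refines_isRefinement_aux M y z hyz α).2 z' hz'
    obtain ⟨x', hx', hxy'⟩ := (refines_isRefinement_aux M x y hxy α).2 y' hy'
    exact ⟨x', hx', y', hxy', hyz'⟩

/-- If `M = (Σ, Rᵃ, Rᶜ)` satisfies the mix condition, then for every
state `s`, the pointed systems `(M, s)` and `((Σ, Rᵃ ∩ Rᶜ, Rᶜ), s)` are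
refinement-equivalent. -/
theorem mixCondition_refinement_equivalent {Act σ : Type} [Fintype Act]
    (M : MTS Act σ) (hMC : MixCondition M) (s : σ) :
    Refines M s ⟨fun a α b => M.Ra a α b ∧ M.Rc a α b, M.Rc⟩ s ∧
    Refines ⟨fun a α b => M.Ra a α b ∧ M.Rc a α b, M.Rc⟩ s M s := by
  constructor
  · refine ⟨fun a b => Refines M a M b, ?_, refines_refl_aux M s⟩
    rintro a b hab α
    constructor
    · intro s' h
      obtain ⟨t', ht', hst'⟩ := (refines_isRefinement_aux M a b hab α).1 s' h
      obtain ⟨t'', ⟨hRa, hRc⟩, hle⟩ := hMC b α t' ht'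
      exact ⟨t'', ⟨hRa, hRc⟩, refines_trans_aux M hst' hle⟩
    · intro t' h
      exact (refines_isRefinement_aux M a b hab α).2 t' h
  · exact ⟨Eq, fun a b hab α => by
      subst hab
      exact ⟨fun s' h => ⟨s', h.1, rfl⟩, fun t' h => ⟨t', h, rfl⟩⟩, rfl⟩
end

section
/- For every pointed modal transition system (M,i) and every formula φ of Hennessy–Milner logic, if (M,i) ⊨ᵃ φ then (M,i) ⊨ᶜ φ. -/
/-- For every pointed modal transition system `(M,i)` and HML formula
`φ`, `(M,i) ⊨ᵃ φ` implies `(M,i) ⊨ᶜ φ`. -/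
theorem sat_a_implies_sat_c {Act σ : Type} [Fintype Act]
    (M : MTS Act σ) (hM : M.IsModal) (i : σ) (φ : HML Act)
    (h : Sat M φ .a i) : Sat M φ .c i := by
  induction φ generalizing i with
  | tt => trivial
  | neg φ ih =>
      intro hc
      exact h (ih _ hc)
  | dia α φ ih =>
      obtain ⟨s', hR, hs⟩ := h
      exact ⟨s', hM _ _ _ hR, ih _ hs⟩
  | and φ ψ ihφ ihψ =>
      exact ⟨ihφ _ h.1, ihψ _ h.2⟩
end

section
/- Let (M,i) and (N,j) be pointed modal transition systems with (M,i) ⪯ (N,j). Then for every formula φ of Hennessy–Milner logic: (M,i) ⊨ᵃ φ implies (N,j) ⊨ᵃ φ, and (N,j) ⊨ᶜ φ implies (M,i) ⊨ᶜ φ. -/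
/-- If `(M,i) ⪯ (N,j)` for pointed modal transition systems, then
`(M,i) ⊨ᵃ φ` implies `(N,j) ⊨ᵃ φ`, and `(N,j) ⊨ᶜ φ` implies `(M,i) ⊨ᶜ φ`. -/
theorem refines_preserves_HML {Act σ τ : Type} [Fintype Act]
    (M : MTS Act σ) (N : MTS Act τ) (hM : M.IsModal) (hN : N.IsModal)
    (i : σ) (j : τ) (h : Refines M i N j) (φ : HML Act) :
    (Sat M φ .a i → Sat N φ .a j) ∧ (Sat N φ .c j → Sat M φ .c i) := by
  obtain ⟨Q, hQ, hij⟩ := h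
  have key : ∀ φ : HML Act, ∀ s t, Q s t →
      (Sat M φ .a s → Sat N φ .a t) ∧ (Sat N φ .c t → Sat M φ .c s) := by
    intro φ
    induction φ with
    | tt => intro s t _; exact ⟨fun _ => trivial, fun _ => trivial⟩
    | neg ψ ih =>
      intro s t hst
      constructor
      · intro hs hc; exact hs ((ih s t hst).2 hc)
      · intro ht ha; exact ht ((ih s t hst).1 ha)
    | dia α ψ ih =>
      intro s t hst
      constructor
      · rintro ⟨s', hR, hs'⟩
        obtain ⟨t', hR', hQ'⟩ := (hQ s t hst α).1 s' hR
        exact ⟨t', hR', (ih s' t' hQ').1 hs'⟩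
      · rintro ⟨t', hR, ht'⟩
        obtain ⟨s', hR', hQ'⟩ := (hQ s t hst α).2 t' hR
        exact ⟨s', hR', (ih s' t' hQ').2 ht'⟩
    | and ψ χ ihψ ihχ =>
      intro s t hst
      exact ⟨fun ⟨h1, h2⟩ => ⟨(ihψ s t hst).1 h1, (ihχ s t hst).1 h2⟩,
             fun ⟨h1, h2⟩ => ⟨(ihψ s t hst).2 h1, (ihχ s t hst).2 h2⟩⟩
  exact key φ i j hij
end

section
/- Let (M,i) and (N,j) be image-finite pointed modal transition systems over a finite event set Act. Then the following are equivalent: (a) (M,i) ⪯ (N,j); (b) for every Hennessy–Milner logic formula φ, (M,i) ⊨ᵃ φ implies (N,j) ⊨ᵃ φ; (c) for every Hennessy–Milner logic formula φ, (N,j) ⊨ᶜ φ implies (M,i) ⊨ᶜ φ. -/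
theorem sat_bigAnd_iff {Act σ : Type} (M : MTS Act σ) (l : List (HML Act)) (m : RMode)
    (s : σ) : Sat M (HML.bigAnd l) m s ↔ ∀ φ ∈ l, Sat M φ m s := by
  induction l with
  | nil => simp [HML.bigAnd, Sat]
  | cons φ l ih => simp [HML.bigAnd, Sat, ih]

theorem refinement_sat {Act σ τ : Type} {M : MTS Act σ} {N : MTS Act τ}
    {Q : σ → τ → Prop} (hQ : IsRefinement M N Q) (φ : HML Act) :
    ∀ s t, Q s t → (Sat M φ .a s → Sat N φ .a t) ∧ (Sat N φ .c t → Sat M φ .c s) := by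
  induction φ with
  | tt => intro s t _; simp [Sat]
  | neg φ ih =>
      intro s t hst
      have h := ih s t hst
      exact ⟨fun ha hc => ha (h.2 hc), fun hc ha => hc (h.1 ha)⟩
  | dia α φ ih =>
      intro s t hst
      constructor
      · rintro ⟨s', hs', hsat⟩
        obtain ⟨t', ht', hq⟩ := (hQ s t hst α).1 s' hs'
        exact ⟨t', ht', (ih s' t' hq).1 hsat⟩
      · rintro ⟨t', ht', hsat⟩
        obtain ⟨s', hs', hq⟩ := (hQ s t hst α).2 t' ht'
        exact ⟨s', hs', (ih s' t' hq).2 hsat⟩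
  | and φ ψ ihφ ihψ =>
      intro s t hst
      have h1 := ihφ s t hst
      have h2 := ihψ s t hst
      exact ⟨fun ⟨a, b⟩ => ⟨h1.1 a, h2.1 b⟩, fun ⟨a, b⟩ => ⟨h1.2 a, h2.2 b⟩⟩

theorem sat_dual_iff {Act σ τ : Type} (M : MTS Act σ) (N : MTS Act τ) (s : σ) (t : τ) :
    (∀ φ : HML Act, Sat M φ .a s → Sat N φ .a t) ↔
    (∀ φ : HML Act, Sat N φ .c t → Sat M φ .c s) := by
  constructor
  · intro h φ hc
    by_contra hns
    exact h (.neg φ) hns hc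
  · intro h φ ha
    by_contra hnt
    exact h (.neg φ) hnt ha

theorem hml_refinement {Act σ τ : Type} (M : MTS Act σ) (N : MTS Act τ)
    (hMf : M.ImageFinite) (hNf : N.ImageFinite) :
    IsRefinement M N (fun s t => ∀ φ : HML Act, Sat M φ .a s → Sat N φ .a t) := by
  classical
  intro s t hst α
  constructor
  · -- asserted direction
    intro s' hs'
    by_contra hno
    push_neg at hno
    have key : ∀ t' : τ, ∃ φ : HML Act,
        Sat M φ .a s' ∧ (N.Ra t α t' → ¬ Sat N φ .a t') := by
      intro t'
      by_cases hr : N.Ra t α t'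
      · have h := hno t' hr
        obtain ⟨φ, h1, h2⟩ := h
        exact ⟨φ, h1, fun _ => h2⟩
      · exact ⟨.tt, trivial, fun hr' => absurd hr' hr⟩
    choose f hf1 hf2 using key
    set F := ((hNf t α).1).toFinset with hF
    set l := F.toList.map f with hl
    have hsatM : Sat M (.dia α (HML.bigAnd l)) .a s := by
      refine ⟨s', hs', (sat_bigAnd_iff M l .a s').mpr ?_⟩
      intro φ hφ
      simp only [hl, List.mem_map] at hφ
      obtain ⟨t', _, rfl⟩ := hφ
      exact hf1 t'
    have hsatN := hst _ hsatM
    obtain ⟨t'', ht'', hsat⟩ := hsatN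
    have hmem : t'' ∈ F := by simp [hF, Set.Finite.mem_toFinset]; exact ht''
    have : Sat N (f t'') .a t'' := by
      refine (sat_bigAnd_iff N l .a t'').mp hsat (f t'') ?_
      simp only [hl, List.mem_map]
      exact ⟨t'', Finset.mem_toList.mpr hmem, rfl⟩
    exact hf2 t'' ht'' this
  · -- consistent direction
    intro t' ht'
    have hst' : ∀ φ : HML Act, Sat N φ .c t → Sat M φ .c s :=
      (sat_dual_iff M N s t).mp hst
    by_contra hno
    push_neg at hno
    have key : ∀ s' : σ, ∃ φ : HML Act,
        Sat N φ .c t' ∧ (M.Rc s α s' → ¬ Sat M φ .c s') := by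
      intro s'
      by_cases hr : M.Rc s α s'
      · have h : ¬ ∀ φ : HML Act, Sat M φ .a s' → Sat N φ .a t' := by push_neg; exact hno s' hr
        rw [sat_dual_iff M N s' t'] at h
        push_neg at h
        obtain ⟨φ, h1, h2⟩ := h
        exact ⟨φ, h1, fun _ => h2⟩
      · exact ⟨.tt, trivial, fun hr' => absurd hr' hr⟩
    choose f hf1 hf2 using key
    set S := ((hMf s α).2).toFinset with hS
    set l := S.toList.map f with hl
    have hsatN : Sat N (.dia α (HML.bigAnd l)) .c t := by
      refine ⟨t', ht', (sat_bigAnd_iff N l .c t').mpr ?_⟩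
      intro φ hφ
      simp only [hl, List.mem_map] at hφ
      obtain ⟨s', _, rfl⟩ := hφ
      exact hf1 s'
    have hsatM := hst' _ hsatN
    obtain ⟨s'', hs'', hsat⟩ := hsatM
    have hmem : s'' ∈ S := by simp [hS, Set.Finite.mem_toFinset]; exact hs''
    have : Sat M (f s'') .c s'' := by
      refine (sat_bigAnd_iff M l .c s'').mp hsat (f s'') ?_
      simp only [hl, List.mem_map]
      exact ⟨s'', Finset.mem_toList.mpr hmem, rfl⟩
    exact hf2 s'' hs'' this

/-- For image-finite pointed modal transition systems `(M,i)`, `(N,j)`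
over a finite event set, the following are equivalent: (a) `(M,i) ⪯ (N,j)`;
(b) every `⊨ᵃ`-satisfied HML formula of `(M,i)` is `⊨ᵃ`-satisfied by `(N,j)`;
(c) every `⊨ᶜ`-satisfied HML formula of `(N,j)` is `⊨ᶜ`-satisfied by `(M,i)`. -/
theorem refines_iff_HML_imageFinite {Act σ τ : Type} [Fintype Act]
    (M : MTS Act σ) (N : MTS Act τ) (hM : M.IsModal) (hN : N.IsModal)
    (hMf : M.ImageFinite) (hNf : N.ImageFinite) (i : σ) (j : τ) :
    (Refines M i N j ↔ ∀ φ : HML Act, Sat M φ .a i → Sat N φ .a j) ∧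
    (Refines M i N j ↔ ∀ φ : HML Act, Sat N φ .c j → Sat M φ .c i) := by
  have hAB : Refines M i N j → ∀ φ : HML Act, Sat M φ .a i → Sat N φ .a j := by
    rintro ⟨Q, hQ, hij⟩ φ
    exact (refinement_sat hQ φ i j hij).1
  have hBA : (∀ φ : HML Act, Sat M φ .a i → Sat N φ .a j) → Refines M i N j := by
    intro h
    exact ⟨_, hml_refinement M N hMf hNf, h⟩
  have hAC : Refines M i N j → ∀ φ : HML Act, Sat N φ .c j → Sat M φ .c i := by
    rintro ⟨Q, hQ, hij⟩ φ
    exact (refinement_sat hQ φ i j hij).2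
  exact ⟨⟨hAB, hBA⟩, ⟨hAC, fun h => hBA ((sat_dual_iff M N i j).mpr h)⟩⟩
end

section
/- Let (M,i) and (N,j) be image-finite pointed modal transition systems over a finite event set Act. Then (M,i) ⪯ (N,j) if and only if for every term p of the process algebra MPA, (M,i) ⊨ᵃ φ_p implies (N,j) ⊨ᵃ φ_p. -/
section Aux

open Classical

variable {Act σ τ : Type}

/-- Composition of refinements is a refinement. -/
theorem refines_trans {υ : Type} {M : MTS Act σ} {N : MTS Act τ} {P : MTS Act υ}
    {i : σ} {j : τ} {k : υ} (h1 : Refines M i N j) (h2 : Refines N j P k) :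
    Refines M i P k := by
  obtain ⟨Q1, hQ1, h1⟩ := h1
  obtain ⟨Q2, hQ2, h2⟩ := h2
  refine ⟨fun s u => ∃ t, Q1 s t ∧ Q2 t u, ?_, j, h1, h2⟩
  rintro s u ⟨t, hst, htu⟩ α
  constructor
  · intro s' hs'
    obtain ⟨t', ht', hst'⟩ := (hQ1 s t hst α).1 s' hs'
    obtain ⟨u', hu', htu'⟩ := (hQ2 t u htu α).1 t' ht'
    exact ⟨u', hu', t', hst', htu'⟩
  · intro u' hu'
    obtain ⟨t', ht', htu'⟩ := (hQ2 t u htu α).2 u' hu'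
    obtain ⟨s', hs', hst'⟩ := (hQ1 s t hst α).2 t' ht'
    exact ⟨s', hs', t', hst', htu'⟩

theorem Sat_bigAnd {M : MTS Act σ} {l : List (HML Act)} {m : RMode} {s : σ} :
    Sat M (HML.bigAnd l) m s ↔ ∀ φ ∈ l, Sat M φ m s := by
  induction l with
  | nil => simp [HML.bigAnd, Sat]
  | cons φ l ih => simp [HML.bigAnd, Sat, ih]

theorem negm_negm (m : RMode) : m.negm.negm = m := by cases m <;> rfl

theorem Sat_orf {M : MTS Act σ} {φ ψ : HML Act} {m : RMode} {s : σ} :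
    Sat M (HML.orf φ ψ) m s ↔ Sat M φ m s ∨ Sat M ψ m s := by
  simp [HML.orf, Sat, negm_negm, or_iff_not_and_not]

theorem Sat_bigOr {M : MTS Act σ} {l : List (HML Act)} {m : RMode} {s : σ} :
    Sat M (HML.bigOr l) m s ↔ ∃ φ ∈ l, Sat M φ m s := by
  induction l with
  | nil => simp [HML.bigOr, Sat]
  | cons φ l ih => simp [HML.bigOr, Sat_orf, ih]

theorem Sat_box_a {M : MTS Act σ} {α : Act} {φ : HML Act} {s : σ} :
    Sat M (HML.box α φ) .a s ↔ ∀ s', M.Rc s α s' → Sat M φ .a s' := by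
  simp only [HML.box, Sat, RMode.negm, MTS.R, not_exists, not_and, not_not]

theorem Sat_negdia_a {M : MTS Act σ} {α : Act} {s : σ} :
    Sat M (HML.neg (HML.dia α HML.tt)) .a s ↔ ∀ s', ¬ M.Rc s α s' := by
  simp [Sat, RMode.negm, MTS.R]

end Aux

section Char

variable {Act σ : Type} [Fintype Act] [DecidableEq Act]

/-- Soundness: refinement implies the characteristic formula. -/
theorem sat_of_refines_aux (X : MTS Act σ) (Q : MPA Act → σ → Prop)
    (hQ : IsRefinement MPA.mts X Q) :
    ∀ n, ∀ p : MPA Act, sizeOf p < n → ∀ s, Q p s → Sat X (charForm p) .a s := by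
  intro n
  induction n with
  | zero => intro p h; omega
  | succ n ih =>
    intro p hp s hps
    match p with
    | .zero =>
        rw [charForm]
        rw [Sat_bigAnd]
        simp only [List.mem_map, Finset.mem_toList, Finset.mem_univ, true_and]
        rintro φ ⟨α, rfl⟩
        rw [Sat_negdia_a]
        intro s' hs'
        obtain ⟨r, hr, -⟩ := (hQ _ _ hps α).2 s' hs'
        simp [MPA.mts, MPA.may] at hr
    | .bot => rw [charForm]; trivial
    | .prefMust α q =>
        rw [charForm]
        refine ⟨?_, ?_, ?_⟩
        · obtain ⟨t', ht', hqt'⟩ := (hQ _ _ hps α).1 q (by simp [MPA.mts, MPA.must])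
          exact ⟨t', ht', ih q (by simp at hp ⊢; omega) t' hqt'⟩
        · rw [Sat_box_a]
          intro s' hs'
          obtain ⟨r, hr, hrs'⟩ := (hQ _ _ hps α).2 s' hs'
          simp [MPA.mts, MPA.may] at hr
          subst hr
          exact ih _ (by simp at hp ⊢; omega) s' hrs'
        · rw [Sat_bigAnd]
          simp only [List.mem_map, List.mem_filter, Finset.mem_toList, Finset.mem_univ,
            true_and, decide_eq_true_eq]
          rintro φ ⟨β, hβ, rfl⟩
          rw [Sat_negdia_a]
          intro s' hs'
          obtain ⟨r, hr, -⟩ := (hQ _ _ hps β).2 s' hs'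
          simp [MPA.mts, MPA.may, if_neg hβ] at hr
    | .prefMay α q =>
        rw [charForm]
        refine ⟨?_, ?_⟩
        · rw [Sat_box_a]
          intro s' hs'
          obtain ⟨r, hr, hrs'⟩ := (hQ _ _ hps α).2 s' hs'
          simp [MPA.mts, MPA.may] at hr
          subst hr
          exact ih _ (by simp at hp ⊢; omega) s' hrs'
        · rw [Sat_bigAnd]
          simp only [List.mem_map, List.mem_filter, Finset.mem_toList, Finset.mem_univ,
            true_and, decide_eq_true_eq]
          rintro φ ⟨β, hβ, rfl⟩
          rw [Sat_negdia_a]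
          intro s' hs'
          obtain ⟨r, hr, -⟩ := (hQ _ _ hps β).2 s' hs'
          simp [MPA.mts, MPA.may, if_neg hβ] at hr
    | .plus p1 p2 =>
        rw [charForm]
        refine ⟨?_, ?_⟩
        · rw [Sat_bigAnd]
          simp only [List.mem_flatMap, List.mem_map, List.mem_attach,
            Finset.mem_toList, Finset.mem_univ, true_and]
          rintro φ ⟨α, r, rfl⟩
          obtain ⟨t', ht', hrt'⟩ := (hQ _ _ hps α).1 r.1 (by exact r.2)
          have hsz := MPA.sizeOf_lt_of_mem_must _ α r.1 r.2
          exact ⟨t', ht', ih r.1 (by omega) t' hrt'⟩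
        · rw [Sat_bigAnd]
          simp only [List.mem_map, Finset.mem_toList, Finset.mem_univ, true_and]
          rintro φ ⟨α, rfl⟩
          rw [Sat_box_a]
          intro s' hs'
          obtain ⟨r, hr, hrs'⟩ := (hQ _ _ hps α).2 s' hs'
          rw [Sat_bigOr]
          have hr' : r ∈ (MPA.plus p1 p2).may α := hr
          have hsz := MPA.sizeOf_lt_plus_of_mem_may p1 p2 α r hr'
          refine ⟨charForm r, ?_, ih r (by omega) s' hrs'⟩
          simp only [List.mem_map, List.mem_attach, true_and]
          exact ⟨⟨r, hr'⟩, rfl⟩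

theorem sat_of_refines (X : MTS Act σ) (p : MPA Act) (s : σ)
    (h : Refines MPA.mts p X s) : Sat X (charForm p) .a s := by
  obtain ⟨Q, hQ, hps⟩ := h
  exact sat_of_refines_aux X Q hQ (sizeOf p + 1) p (by omega) s hps

/-- Completeness: the characteristic formula implies refinement. -/
theorem refines_of_sat (X : MTS Act σ) (p : MPA Act) (s : σ)
    (h : Sat X (charForm p) .a s) : Refines MPA.mts p X s := by
  refine ⟨fun q t => Sat X (charForm q) .a t, ?_, h⟩
  clear h p s
  intro p s hps α
  match p with
  | .zero =>
      rw [charForm, Sat_bigAnd] at hps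
      simp only [List.mem_map, Finset.mem_toList, Finset.mem_univ, true_and] at hps
      constructor
      · intro r hr; simp [MPA.mts, MPA.must] at hr
      · intro s' hs'
        exact absurd hs' ((Sat_negdia_a).mp (hps _ ⟨α, rfl⟩) s')
  | .bot =>
      constructor
      · intro r hr; simp [MPA.mts, MPA.must] at hr
      · intro s' _
        refine ⟨.bot, by simp [MPA.mts, MPA.may], ?_⟩
        show Sat X (charForm MPA.bot) RMode.a s'
        rw [charForm]; trivial
  | .prefMust β q =>
      rw [charForm] at hps
      obtain ⟨hdia, hbox, hblock⟩ := hps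
      rw [Sat_bigAnd] at hblock
      simp only [List.mem_map, List.mem_filter, Finset.mem_toList, Finset.mem_univ,
        true_and, decide_eq_true_eq] at hblock
      constructor
      · intro r hr
        by_cases hαβ : α = β
        · subst hαβ
          simp [MPA.mts, MPA.must] at hr
          subst hr
          obtain ⟨t', ht', hq⟩ := hdia
          exact ⟨t', ht', hq⟩
        · simp [MPA.mts, MPA.must, if_neg hαβ] at hr
      · intro s' hs'
        by_cases hαβ : α = β
        · subst hαβ
          refine ⟨q, by simp [MPA.mts, MPA.may], Sat_box_a.mp hbox s' hs'⟩
        · exact absurd hs' ((Sat_negdia_a).mp (hblock _ ⟨α, hαβ, rfl⟩) s')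
  | .prefMay β q =>
      rw [charForm] at hps
      obtain ⟨hbox, hblock⟩ := hps
      rw [Sat_bigAnd] at hblock
      simp only [List.mem_map, List.mem_filter, Finset.mem_toList, Finset.mem_univ,
        true_and, decide_eq_true_eq] at hblock
      constructor
      · intro r hr
        by_cases hαβ : α = β
        · simp [MPA.mts, MPA.must, hαβ] at hr
        · simp [MPA.mts, MPA.must, if_neg hαβ] at hr
      · intro s' hs'
        by_cases hαβ : α = β
        · subst hαβ
          refine ⟨q, by simp [MPA.mts, MPA.may], Sat_box_a.mp hbox s' hs'⟩
        · exact absurd hs' ((Sat_negdia_a).mp (hblock _ ⟨α, hαβ, rfl⟩) s')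
  | .plus p1 p2 =>
      rw [charForm] at hps
      obtain ⟨hmust, hmay⟩ := hps
      rw [Sat_bigAnd] at hmust hmay
      simp only [List.mem_flatMap, List.mem_map, List.mem_attach,
        Finset.mem_toList, Finset.mem_univ, true_and] at hmust
      simp only [List.mem_map, Finset.mem_toList, Finset.mem_univ, true_and] at hmay
      constructor
      · intro r hr
        have := hmust (HML.dia α (charForm r)) ⟨α, ⟨⟨r, hr⟩, rfl⟩⟩
        obtain ⟨t', ht', hq⟩ := this
        exact ⟨t', ht', hq⟩
      · intro s' hs'
        have := Sat_box_a.mp (hmay _ ⟨α, rfl⟩) s' hs'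
        rw [Sat_bigOr] at this
        simp only [List.mem_map, List.mem_attach, true_and] at this
        obtain ⟨φ, ⟨⟨r, hr⟩, rfl⟩, hsat⟩ := this
        exact ⟨r, hr, hsat⟩

end Char
section Approx

open Classical

variable {Act σ τ : Type}

/-- `n`-step refinement approximants. -/
def RefN (M : MTS Act σ) (N : MTS Act τ) : ℕ → σ → τ → Prop
  | 0, _, _ => True
  | n+1, s, t => ∀ α : Act,
      (∀ s', M.Ra s α s' → ∃ t', N.Ra t α t' ∧ RefN M N n s' t') ∧
      (∀ t', N.Rc t α t' → ∃ s', M.Rc s α s' ∧ RefN M N n s' t')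

theorem RefN_succ_imp {M : MTS Act σ} {N : MTS Act τ} :
    ∀ n (s : σ) (t : τ), RefN M N (n+1) s t → RefN M N n s t := by
  intro n
  induction n with
  | zero => intro s t _; trivial
  | succ n ih =>
    intro s t h α
    constructor
    · intro s' hs'
      obtain ⟨t', ht', h'⟩ := (h α).1 s' hs'
      exact ⟨t', ht', ih _ _ h'⟩
    · intro t' ht'
      obtain ⟨s', hs', h'⟩ := (h α).2 t' ht'
      exact ⟨s', hs', ih _ _ h'⟩

theorem RefN_mono {M : MTS Act σ} {N : MTS Act τ} {m n : ℕ} (hmn : m ≤ n)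
    {s : σ} {t : τ} (h : RefN M N n s t) : RefN M N m s t := by
  obtain ⟨k, rfl⟩ := Nat.exists_eq_add_of_le hmn
  induction k with
  | zero => exact h
  | succ k ih =>
      exact ih (Nat.le_add_right _ _) (RefN_succ_imp _ _ _ (by rwa [Nat.add_succ] at h))

/-- The limit of the approximants is a refinement (image-finiteness). -/
theorem isRefinement_limit {M : MTS Act σ} {N : MTS Act τ}
    (hMf : M.ImageFinite) (hNf : N.ImageFinite) :
    IsRefinement M N (fun s t => ∀ n, RefN M N n s t) := by
  intro s t h α
  constructor
  · intro s' hs'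
    by_contra hcon
    push_neg at hcon
    set g : τ → ℕ := fun t' =>
      if h' : ∃ n, ¬ RefN M N n s' t' then Nat.find h' else 0 with hg
    set b : ℕ := ((hNf t α).1.toFinset).sup g with hb
    obtain ⟨t', ht', hR⟩ := (h (b+1) α).1 s' hs'
    have hex : ∃ n, ¬ RefN M N n s' t' := hcon t' ht'
    have hgt' : g t' = Nat.find hex := by simp [hg, dif_pos hex]
    have hle : g t' ≤ b := Finset.le_sup (by simpa using ht')
    exact Nat.find_spec hex (RefN_mono (hgt' ▸ hle) hR)
  · intro t' ht'
    by_contra hcon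
    push_neg at hcon
    set g : σ → ℕ := fun s' =>
      if h' : ∃ n, ¬ RefN M N n s' t' then Nat.find h' else 0 with hg
    set b : ℕ := ((hMf s α).2.toFinset).sup g with hb
    obtain ⟨s', hs', hR⟩ := (h (b+1) α).2 t' ht'
    have hex : ∃ n, ¬ RefN M N n s' t' := hcon s' hs'
    have hgs' : g s' = Nat.find hex := by simp [hg, dif_pos hex]
    have hle : g s' ≤ b := Finset.le_sup (by simpa using hs')
    exact Nat.find_spec hex (RefN_mono (hgs' ▸ hle) hR)

/-- Finite sum of MPA terms. -/
def sumL : List (MPA Act) → MPA Act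
  | [] => .zero
  | p :: l => .plus p (sumL l)

variable [DecidableEq Act]

theorem mem_must_sumL {l : List (MPA Act)} {β : Act} {r : MPA Act} :
    r ∈ (sumL l).must β ↔ ∃ p ∈ l, r ∈ p.must β := by
  induction l with
  | nil => simp [sumL, MPA.must]
  | cons p l ih => simp [sumL, MPA.must, ih]

theorem mem_may_sumL {l : List (MPA Act)} {β : Act} {r : MPA Act} :
    r ∈ (sumL l).may β ↔ ∃ p ∈ l, r ∈ p.may β := by
  induction l with
  | nil => simp [sumL, MPA.may]
  | cons p l ih => simp [sumL, MPA.may, ih]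

variable [Fintype Act]

/-- Characteristic MPA term of depth `n` for a state of an image-finite MTS. -/
noncomputable def chi (M : MTS Act σ) (hMf : M.ImageFinite) : ℕ → σ → MPA Act
  | 0, _ => .bot
  | n+1, s => sumL ((Finset.univ : Finset Act).toList.flatMap fun α =>
      ((hMf s α).1.toFinset.toList.map fun s' => .prefMust α (chi M hMf n s')) ++
      ((hMf s α).2.toFinset.toList.map fun s' => .prefMay α (chi M hMf n s')))

theorem chi_must_mem {M : MTS Act σ} {hMf : M.ImageFinite} {n : ℕ} {s s' : σ} {β : Act}
    (h : M.Ra s β s') : chi M hMf n s' ∈ (chi M hMf (n+1) s).must β := by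
  rw [chi, mem_must_sumL]
  refine ⟨.prefMust β (chi M hMf n s'), ?_, by simp [MPA.must]⟩
  simp only [List.mem_flatMap, List.mem_append, List.mem_map, Finset.mem_toList,
    Finset.mem_univ, true_and, Set.Finite.mem_toFinset]
  exact ⟨β, Or.inl ⟨s', h, rfl⟩⟩

theorem chi_must_inv {M : MTS Act σ} {hMf : M.ImageFinite} {n : ℕ} {s : σ} {β : Act}
    {r : MPA Act} (h : r ∈ (chi M hMf (n+1) s).must β) :
    ∃ s', M.Ra s β s' ∧ r = chi M hMf n s' := by
  rw [chi, mem_must_sumL] at h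
  obtain ⟨p, hp, hr⟩ := h
  simp only [List.mem_flatMap, List.mem_append, List.mem_map, Finset.mem_toList,
    Finset.mem_univ, true_and, Set.Finite.mem_toFinset] at hp
  obtain ⟨α, hα | hα⟩ := hp
  · obtain ⟨s', hs', rfl⟩ := hα
    by_cases hβα : β = α
    · subst hβα
      simp [MPA.must] at hr
      exact ⟨s', hs', hr⟩
    · simp [MPA.must, if_neg hβα] at hr
  · obtain ⟨s', hs', rfl⟩ := hα
    simp [MPA.must] at hr

theorem chi_may_mem {M : MTS Act σ} {hMf : M.ImageFinite} {n : ℕ} {s s' : σ} {β : Act}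
    (h : M.Rc s β s') : chi M hMf n s' ∈ (chi M hMf (n+1) s).may β := by
  rw [chi, mem_may_sumL]
  refine ⟨.prefMay β (chi M hMf n s'), ?_, by simp [MPA.may]⟩
  simp only [List.mem_flatMap, List.mem_append, List.mem_map, Finset.mem_toList,
    Finset.mem_univ, true_and, Set.Finite.mem_toFinset]
  exact ⟨β, Or.inr ⟨s', h, rfl⟩⟩

theorem chi_may_inv {M : MTS Act σ} (hM : M.IsModal) {hMf : M.ImageFinite} {n : ℕ} {s : σ}
    {β : Act} {r : MPA Act} (h : r ∈ (chi M hMf (n+1) s).may β) :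
    ∃ s', M.Rc s β s' ∧ r = chi M hMf n s' := by
  rw [chi, mem_may_sumL] at h
  obtain ⟨p, hp, hr⟩ := h
  simp only [List.mem_flatMap, List.mem_append, List.mem_map, Finset.mem_toList,
    Finset.mem_univ, true_and, Set.Finite.mem_toFinset] at hp
  obtain ⟨α, hα | hα⟩ := hp
  · obtain ⟨s', hs', rfl⟩ := hα
    by_cases hβα : β = α
    · subst hβα
      simp [MPA.may] at hr
      exact ⟨s', hM _ _ _ hs', hr⟩
    · simp [MPA.may, if_neg hβα] at hr
  · obtain ⟨s', hs', rfl⟩ := hα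
    by_cases hβα : β = α
    · subst hβα
      simp [MPA.may] at hr
      exact ⟨s', hs', hr⟩
    · simp [MPA.may, if_neg hβα] at hr

/-- `chi n s` is refined by `s`. -/
theorem chi_refines {M : MTS Act σ} (hMf : M.ImageFinite) (n : ℕ) (s : σ) :
    Refines MPA.mts (chi M hMf n s) M s := by
  refine ⟨fun p u => ∃ m, p = chi M hMf m u, ?_, n, rfl⟩
  rintro p u ⟨m, rfl⟩ α
  match m with
  | 0 =>
      constructor
      · intro r hr; simp [chi, MPA.mts, MPA.must] at hr
      · intro u' hu'
        exact ⟨.bot, by simp [chi, MPA.mts, MPA.may], 0, by simp [chi]⟩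
  | m+1 =>
      constructor
      · intro r hr
        obtain ⟨s', hs', rfl⟩ := chi_must_inv hr
        exact ⟨s', hs', m, rfl⟩
      · intro u' hu'
        exact ⟨chi M hMf m u', chi_may_mem hu', m, rfl⟩

/-- If `chi n s` is refined by `t`, then `s ⪯ₙ t`. -/
theorem refN_of_chi_refines {M : MTS Act σ} (hM : M.IsModal) (hMf : M.ImageFinite)
    {N : MTS Act τ} (Q : MPA Act → τ → Prop) (hQ : IsRefinement MPA.mts N Q) :
    ∀ (n : ℕ) (s : σ) (t : τ), Q (chi M hMf n s) t → RefN M N n s t := by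
  intro n
  induction n with
  | zero => intro s t _; trivial
  | succ n ih =>
    intro s t h α
    constructor
    · intro s' hs'
      obtain ⟨t', ht', hq⟩ := (hQ _ _ h α).1 (chi M hMf n s') (chi_must_mem hs')
      exact ⟨t', ht', ih _ _ hq⟩
    · intro t' ht'
      obtain ⟨r, hr, hq⟩ := (hQ _ _ h α).2 t' ht'
      obtain ⟨s', hs', rfl⟩ := chi_may_inv hM hr
      exact ⟨s', hs', ih _ _ hq⟩

end Approx

/-- For image-finite pointed modal transition systems `(M,i)`, `(N,j)`
over a finite event set, `(M,i) ⪯ (N,j)` iff for every MPA term `p`,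
`(M,i) ⊨ᵃ φ_p` implies `(N,j) ⊨ᵃ φ_p`. -/
theorem refines_iff_charForms {Act σ τ : Type} [Fintype Act] [DecidableEq Act]
    (M : MTS Act σ) (N : MTS Act τ) (hM : M.IsModal) (hN : N.IsModal)
    (hMf : M.ImageFinite) (hNf : N.ImageFinite) (i : σ) (j : τ) :
    Refines M i N j ↔
      ∀ p : MPA Act, Sat M (charForm p) .a i → Sat N (charForm p) .a j := by
  constructor
  · intro h p hsat
    exact sat_of_refines N p j (refines_trans (refines_of_sat M p i hsat) h)
  · intro H
    refine ⟨fun s t => ∀ n, RefN M N n s t, isRefinement_limit hMf hNf, ?_⟩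
    intro n
    have h1 : Refines MPA.mts (chi M hMf n i) M i := chi_refines hMf n i
    have h2 := H _ (sat_of_refines M _ i h1)
    obtain ⟨Q, hQ, hq⟩ := refines_of_sat N _ j h2
    exact refN_of_chi_refines hM hMf Q hQ n i j hq
end

section
/- Let (M,i) be a pointed modal transition system over a finite event set Act such that (M,i) ⊨ᵃ ψ for every formula ψ ∈ Φ, and let s be a state Rᶜ-reachable from i in M. Then (M,s) ⊨ᵃ ψ for every formula ψ ∈ Φ. -/
/-- If `(M,i)` satisfies (in mode `a`) every formula `ψ_{w,α,p} ∈ Φ`,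
and `s` is `Rᶜ`-reachable from `i`, then `(M,s)` satisfies every formula of `Φ`. -/
theorem psiForms_preserved_by_reachability {Act σ : Type} [Fintype Act] [DecidableEq Act]
    (M : MTS Act σ) (hM : M.IsModal) (i : σ)
    (h : ∀ (w : List Act) (α : Act) (p : MPA Act), Sat M (psiForm w α p) .a i)
    (s : σ) (hs : M.ReachC i s) :
    ∀ (w : List Act) (α : Act) (p : MPA Act), Sat M (psiForm w α p) .a s := by
  induction hs with
  | refl => exact h
  | tail _ hstep ih =>
    intro w α p
    obtain ⟨δ, hδ⟩ := hstep
    have := ih (δ :: w) α p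
    simp only [psiForm, List.foldr_cons, HML.box, Sat, RMode.negm, not_exists, not_and,
      not_not] at this
    exact this _ hδ
end

section
/- Let (M,i) be an image-finite pointed modal transition system over a finite event set Act. The following are equivalent: (i) (M,i) is refinement-equivalent to some pointed labelled transition system; (ii) for every Hennessy–Milner logic formula φ, (M,i) ⊨ᶜ φ implies (M,i) ⊨ᵃ φ; (iii) (M,i) ⊨ᵃ ψ for every formula ψ ∈ Φ. -/
/- ========================= Auxiliary development ========================= -/

namespace Aux

open Classical

variable {Act σ τ : Type}

theorem negm_negm (m : RMode) : m.negm.negm = m := by cases m <;> rfl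

theorem sat_bigAnd (M : MTS Act σ) (l : List (HML Act)) (m : RMode) (s : σ) :
    Sat M (.bigAnd l) m s ↔ ∀ ψ ∈ l, Sat M ψ m s := by
  induction l with
  | nil => simp [HML.bigAnd, Sat]
  | cons φ l ih => simp [HML.bigAnd, Sat, ih]

theorem sat_orf (M : MTS Act σ) (A B : HML Act) (m : RMode) (s : σ) :
    Sat M (HML.orf A B) m s ↔ Sat M A m s ∨ Sat M B m s := by
  simp only [HML.orf, Sat, negm_negm]
  tauto

theorem sat_bigOr (M : MTS Act σ) (l : List (HML Act)) (m : RMode) (s : σ) :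
    Sat M (.bigOr l) m s ↔ ∃ ψ ∈ l, Sat M ψ m s := by
  induction l with
  | nil => simp [HML.bigOr, Sat]
  | cons φ l ih => simp [HML.bigOr, sat_orf, ih]

theorem sat_box (M : MTS Act σ) (α : Act) (φ : HML Act) (m : RMode) (s : σ) :
    Sat M (HML.box α φ) m s ↔ ∀ s', M.R m.negm s α s' → Sat M φ m s' := by
  simp only [HML.box, Sat, negm_negm]
  push_neg
  tauto

theorem sat_mono (M : MTS Act σ) (hM : M.IsModal) :
    ∀ φ : HML Act, ∀ s, Sat M φ .a s → Sat M φ .c s := by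
  intro φ
  induction φ with
  | tt => simp [Sat]
  | neg φ ih => exact fun s h ha => h (ih s ha)
  | dia α φ ih => exact fun s ⟨s', hr, hs⟩ => ⟨s', hM _ _ _ hr, ih s' hs⟩
  | and φ ψ ihφ ihψ => exact fun s ⟨h1, h2⟩ => ⟨ihφ s h1, ihψ s h2⟩

theorem refinement_sound {M : MTS Act σ} {N : MTS Act τ} {Q : σ → τ → Prop}
    (hQ : IsRefinement M N Q) :
    ∀ φ : HML Act, ∀ s t, Q s t →
      (Sat M φ .a s → Sat N φ .a t) ∧ (Sat N φ .c t → Sat M φ .c s) := by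
  intro φ
  induction φ with
  | tt => simp [Sat]
  | neg φ ih =>
      exact fun s t hst =>
        ⟨fun h hc => h ((ih s t hst).2 hc), fun h ha => h ((ih s t hst).1 ha)⟩
  | dia α φ ih =>
      intro s t hst
      constructor
      · rintro ⟨s', hr, hs⟩
        obtain ⟨t', hr', hst'⟩ := (hQ s t hst α).1 s' hr
        exact ⟨t', hr', (ih s' t' hst').1 hs⟩
      · rintro ⟨t', hr, ht⟩
        obtain ⟨s', hr', hst'⟩ := (hQ s t hst α).2 t' hr
        exact ⟨s', hr', (ih s' t' hst').2 ht⟩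
  | and φ ψ ihφ ihψ =>
      intro s t hst
      exact ⟨fun ⟨h1, h2⟩ => ⟨(ihφ s t hst).1 h1, (ihψ s t hst).1 h2⟩,
        fun ⟨h1, h2⟩ => ⟨(ihφ s t hst).2 h1, (ihψ s t hst).2 h2⟩⟩

theorem lts_R (R : σ → Act → σ → Prop) (m : RMode) : (LTS R).R m = R := by
  cases m <;> rfl

theorem sat_lts_mode (R : σ → Act → σ → Prop) :
    ∀ φ : HML Act, ∀ (m m' : RMode) (s : σ), Sat (LTS R) φ m s → Sat (LTS R) φ m' s := by
  intro φ
  induction φ with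
  | tt => simp [Sat]
  | neg φ ih => exact fun m m' s h h' => h (ih _ _ _ h')
  | dia α φ ih =>
      intro m m' s ⟨s', hr, hs⟩
      rw [lts_R] at hr
      exact ⟨s', by rw [lts_R]; exact hr, ih _ _ _ hs⟩
  | and φ ψ ihφ ihψ => exact fun m m' s ⟨h1, h2⟩ => ⟨ihφ _ _ _ h1, ihψ _ _ _ h2⟩

theorem sat_toLTS (M : MTS Act σ) (hM : M.IsModal) :
    ∀ φ : HML Act, ∀ s,
      (Sat M φ .a s → Sat (LTS M.Ra) φ .a s) ∧ (Sat (LTS M.Ra) φ .c s → Sat M φ .c s) := by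
  intro φ
  induction φ with
  | tt => simp [Sat]
  | neg φ ih =>
      exact fun s => ⟨fun h h' => h ((ih s).2 h'), fun h h' => h ((ih s).1 h')⟩
  | dia α φ ih =>
      intro s
      constructor
      · rintro ⟨s', hr, hs⟩
        exact ⟨s', hr, (ih s').1 hs⟩
      · rintro ⟨s', hr, hs⟩
        exact ⟨s', hM _ _ _ hr, (ih s').2 hs⟩
  | and φ ψ ihφ ihψ =>
      exact fun s => ⟨fun ⟨h1, h2⟩ => ⟨(ihφ s).1 h1, (ihψ s).1 h2⟩,
        fun ⟨h1, h2⟩ => ⟨(ihφ s).2 h1, (ihψ s).2 h2⟩⟩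

noncomputable def RaListOf (M : MTS Act σ) (hMf : M.ImageFinite) (s : σ) (α : Act) :
    List σ := ((hMf s α).1.toFinset).toList

noncomputable def RcListOf (M : MTS Act σ) (hMf : M.ImageFinite) (s : σ) (α : Act) :
    List σ := ((hMf s α).2.toFinset).toList

theorem mem_RaListOf {M : MTS Act σ} {hMf : M.ImageFinite} {s t : σ} {α : Act} :
    t ∈ RaListOf M hMf s α ↔ M.Ra s α t := by
  simp [RaListOf, Set.Finite.mem_toFinset]

theorem mem_RcListOf {M : MTS Act σ} {hMf : M.ImageFinite} {s t : σ} {α : Act} :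
    t ∈ RcListOf M hMf s α ↔ M.Rc s α t := by
  simp [RcListOf, Set.Finite.mem_toFinset]

variable [Fintype Act] [DecidableEq Act]

noncomputable def unfoldT (M : MTS Act σ) (hMf : M.ImageFinite) : ℕ → σ → MPA Act
  | 0, _ => .bot
  | n+1, s => .plus ((((Finset.univ : Finset Act).toList).flatMap (fun α =>
      ((RaListOf M hMf s α).map fun t => MPA.prefMust α (unfoldT M hMf n t)) ++
      ((RcListOf M hMf s α).map fun t => MPA.prefMay α (unfoldT M hMf n t)))).foldr
        .plus .zero) .zero

theorem must_foldr (L : List (MPA Act)) (β : Act) :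
    (L.foldr MPA.plus MPA.zero).must β = L.flatMap (MPA.must · β) := by
  induction L with
  | nil => simp [MPA.must]
  | cons p L ih => simp [MPA.must, ih]

theorem may_foldr (L : List (MPA Act)) (β : Act) :
    (L.foldr MPA.plus MPA.zero).may β = L.flatMap (MPA.may · β) := by
  induction L with
  | nil => simp [MPA.may]
  | cons p L ih => simp [MPA.may, ih]

theorem mem_must_unfold {M : MTS Act σ} {hMf : M.ImageFinite} {n : ℕ} {s : σ} {β : Act}
    {r : MPA Act} :
    r ∈ (unfoldT M hMf (n+1) s).must β ↔ ∃ t, M.Ra s β t ∧ r = unfoldT M hMf n t := by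
  simp only [unfoldT, MPA.must, must_foldr, List.mem_append, List.mem_flatMap,
    List.mem_map, List.not_mem_nil, or_false]
  constructor
  · rintro ⟨q, ⟨α, -, hq⟩, hr⟩
    rcases hq with ⟨t, ht, rfl⟩ | ⟨t, ht, rfl⟩
    · simp only [MPA.must] at hr
      split at hr
      · simp_all only [List.mem_singleton]
        exact ⟨t, mem_RaListOf.1 ht, rfl⟩
      · simp at hr
    · simp [MPA.must] at hr
  · rintro ⟨t, ht, rfl⟩
    exact ⟨MPA.prefMust β (unfoldT M hMf n t),
      ⟨β, Finset.mem_toList.2 (Finset.mem_univ β), Or.inl ⟨t, mem_RaListOf.2 ht, rfl⟩⟩,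
      by simp [MPA.must]⟩

theorem mem_may_unfold {M : MTS Act σ} {hMf : M.ImageFinite} {n : ℕ} {s : σ} {β : Act}
    {r : MPA Act} :
    r ∈ (unfoldT M hMf (n+1) s).may β ↔
      ∃ t, (M.Ra s β t ∨ M.Rc s β t) ∧ r = unfoldT M hMf n t := by
  simp only [unfoldT, MPA.may, may_foldr, List.mem_append, List.mem_flatMap,
    List.mem_map, List.not_mem_nil, or_false]
  constructor
  · rintro ⟨q, ⟨α, -, hq⟩, hr⟩
    rcases hq with ⟨t, ht, rfl⟩ | ⟨t, ht, rfl⟩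
    · simp only [MPA.may] at hr
      split at hr
      · simp_all only [List.mem_singleton]
        exact ⟨t, Or.inl (mem_RaListOf.1 ht), rfl⟩
      · simp at hr
    · simp only [MPA.may] at hr
      split at hr
      · simp_all only [List.mem_singleton]
        exact ⟨t, Or.inr (mem_RcListOf.1 ht), rfl⟩
      · simp at hr
  · rintro ⟨t, ht | ht, rfl⟩
    · exact ⟨MPA.prefMust β (unfoldT M hMf n t),
        ⟨β, Finset.mem_toList.2 (Finset.mem_univ β), Or.inl ⟨t, mem_RaListOf.2 ht, rfl⟩⟩,
        by simp [MPA.may]⟩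
    · exact ⟨MPA.prefMay β (unfoldT M hMf n t),
        ⟨β, Finset.mem_toList.2 (Finset.mem_univ β), Or.inr ⟨t, mem_RcListOf.2 ht, rfl⟩⟩,
        by simp [MPA.may]⟩

theorem sat_charForm_plus (N : MTS Act σ) (p q : MPA Act) (m : RMode) (u : σ) :
    Sat N (charForm (.plus p q)) m u ↔
      ((∀ α, ∀ r ∈ (MPA.plus p q).must α, ∃ u', N.R m u α u' ∧ Sat N (charForm r) m u') ∧
       (∀ α, ∀ u', N.R m.negm u α u' →
          ∃ r ∈ (MPA.plus p q).may α, Sat N (charForm r) m u')) := by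
  rw [charForm]
  simp only [Sat, sat_bigAnd, sat_box, sat_bigOr, List.mem_flatMap, List.mem_map,
    List.mem_attach, true_and, Subtype.exists, Finset.mem_toList, Finset.mem_univ]
  constructor
  · rintro ⟨h1, h2⟩
    constructor
    · intro α r hr
      have := h1 (HML.dia α (charForm r)) ⟨α, r, hr, rfl⟩
      simpa [Sat] using this
    · intro α u' hu'
      have := h2 (HML.box α (.bigOr (((MPA.plus p q).may α).attach.map
        fun r => charForm r.1))) ⟨α, rfl⟩
      rw [sat_box] at this
      have := this u' hu'
      rw [sat_bigOr] at this
      obtain ⟨ψ, hψ, hs⟩ := this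
      simp only [List.mem_map, List.mem_attach, true_and, Subtype.exists] at hψ
      obtain ⟨r, hr, rfl⟩ := hψ
      exact ⟨r, hr, hs⟩
  · rintro ⟨h1, h2⟩
    constructor
    · rintro ψ ⟨α, r, hr, rfl⟩
      simpa [Sat] using h1 α r hr
    · rintro ψ ⟨α, rfl⟩
      rw [sat_box]
      intro u' hu'
      rw [sat_bigOr]
      obtain ⟨r, hr, hs⟩ := h2 α u' hu'
      refine ⟨charForm r, ?_, hs⟩
      simp only [List.mem_map, List.mem_attach, true_and, Subtype.exists]
      exact ⟨r, hr, rfl⟩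

theorem unfold_succ_eq (M : MTS Act σ) (hMf : M.ImageFinite) (n : ℕ) (s : σ) :
    ∃ p, unfoldT M hMf (n+1) s = MPA.plus p MPA.zero := ⟨_, by rw [unfoldT]⟩

theorem sat_charForm_unfold_succ {M : MTS Act σ} {hMf : M.ImageFinite}
    (n : ℕ) (s : σ) (m : RMode) (u : σ) :
    Sat M (charForm (unfoldT M hMf (n+1) s)) m u ↔
      ((∀ α t, M.Ra s α t →
          ∃ u', M.R m u α u' ∧ Sat M (charForm (unfoldT M hMf n t)) m u') ∧
       (∀ α u', M.R m.negm u α u' →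
          ∃ t, (M.Ra s α t ∨ M.Rc s α t) ∧ Sat M (charForm (unfoldT M hMf n t)) m u')) := by
  obtain ⟨p, hp⟩ := unfold_succ_eq M hMf n s
  rw [hp, sat_charForm_plus, ← hp]
  constructor
  · rintro ⟨h1, h2⟩
    constructor
    · intro α t ht
      exact h1 α _ (mem_must_unfold.2 ⟨t, ht, rfl⟩)
    · intro α u' hu'
      obtain ⟨r, hr, hs⟩ := h2 α u' hu'
      obtain ⟨t, ht, rfl⟩ := mem_may_unfold.1 hr
      exact ⟨t, ht, hs⟩
  · rintro ⟨h1, h2⟩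
    constructor
    · intro α r hr
      obtain ⟨t, ht, rfl⟩ := mem_must_unfold.1 hr
      exact h1 α t ht
    · intro α u' hu'
      obtain ⟨t, ht, hs⟩ := h2 α u' hu'
      exact ⟨unfoldT M hMf n t, mem_may_unfold.2 ⟨t, ht, rfl⟩, hs⟩

theorem sat_c_charForm_unfold {M : MTS Act σ} (hM : M.IsModal) (hMf : M.ImageFinite) :
    ∀ (n : ℕ) (s : σ), Sat M (charForm (unfoldT M hMf n s)) .c s := by
  intro n
  induction n with
  | zero => intro s; rw [show unfoldT M hMf 0 s = MPA.bot from rfl, charForm]; trivial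
  | succ n ih =>
      intro s
      rw [sat_charForm_unfold_succ]
      constructor
      · exact fun α t ht => ⟨t, hM _ _ _ ht, ih t⟩
      · exact fun α u' hu' => ⟨u', Or.inl hu', ih u'⟩

theorem transfer {M : MTS Act σ} (hM : M.IsModal) (hMf : M.ImageFinite) :
    ∀ φ : HML Act, ∀ (n : ℕ) (s u : σ), φ.depth ≤ n →
      Sat M (charForm (unfoldT M hMf n s)) .a u →
      (Sat M φ .a s → Sat M φ .a u) ∧ (Sat M φ .c u → Sat M φ .c s) := by
  intro φ
  induction φ with
  | tt => intro n s u _ _; simp [Sat]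
  | neg φ ih =>
      intro n s u hd hu
      exact ⟨fun h hc => h ((ih n s u hd hu).2 hc), fun h ha => h ((ih n s u hd hu).1 ha)⟩
  | dia α φ ih =>
      intro n s u hd hu
      obtain ⟨n, rfl⟩ : ∃ n', n = n' + 1 := by
        cases n with
        | zero => simp [HML.depth] at hd
        | succ k => exact ⟨k, rfl⟩
      rw [sat_charForm_unfold_succ] at hu
      obtain ⟨h1, h2⟩ := hu
      have hdφ : φ.depth ≤ n := by simp [HML.depth] at hd; omega
      constructor
      · rintro ⟨s', hr, hs⟩
        obtain ⟨u', hru, hcf⟩ := h1 α s' hr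
        exact ⟨u', hru, (ih n s' u' hdφ hcf).1 hs⟩
      · rintro ⟨u', hru, hsu⟩
        obtain ⟨t, hrt, hcf⟩ := h2 α u' hru
        refine ⟨t, ?_, (ih n t u' hdφ hcf).2 hsu⟩
        rcases hrt with h | h
        · exact hM _ _ _ h
        · exact h
  | and φ ψ ihφ ihψ =>
      intro n s u hd hu
      have hdφ : φ.depth ≤ n := le_trans (le_max_left _ _) hd
      have hdψ : ψ.depth ≤ n := le_trans (le_max_right _ _) hd
      exact ⟨fun ⟨h1, h2⟩ => ⟨(ihφ n s u hdφ hu).1 h1, (ihψ n s u hdψ hu).1 h2⟩,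
        fun ⟨h1, h2⟩ => ⟨(ihφ n s u hdφ hu).2 h1, (ihψ n s u hdψ hu).2 h2⟩⟩


theorem Q_a {M : MTS Act σ} {s t : σ}
    (h : ∀ φ : HML Act, Sat M φ .c t → Sat (LTS M.Ra) φ .c s) :
    ∀ φ : HML Act, Sat (LTS M.Ra) φ .a s → Sat M φ .a t := by
  intro φ hφ
  by_contra hn
  exact (h (.neg φ) hn) hφ

theorem construct {M : MTS Act σ} (hM : M.IsModal) (hMf : M.ImageFinite) :
    IsRefinement (LTS M.Ra) M
      (fun s t => ∀ φ : HML Act, Sat M φ .c t → Sat (LTS M.Ra) φ .c s) := by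
  intro s t hQ α
  constructor
  · intro s' hs'
    by_contra hcon
    push_neg at hcon
    have key : ∀ t' : σ, ∃ φ : HML Act, M.Ra t α t' →
        Sat M φ .c t' ∧ ¬ Sat (LTS M.Ra) φ .c s' := by
      intro t'
      by_cases h : M.Ra t α t'
      · have h2 := hcon t' h
        obtain ⟨φ, h1, h2⟩ := h2
        exact ⟨φ, fun _ => ⟨h1, h2⟩⟩
      · exact ⟨.tt, fun hh => absurd hh h⟩
    choose f hf using key
    have hχ : Sat (LTS M.Ra) (HML.dia α
        (.bigAnd ((((hMf t α).1.toFinset).toList).map fun t' => .neg (f t')))) .a s := by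
      refine ⟨s', hs', ?_⟩
      rw [sat_bigAnd]
      rintro ψ hψ
      simp only [List.mem_map] at hψ
      obtain ⟨t', ht', rfl⟩ := hψ
      have hra : M.Ra t α t' := by
        rw [Finset.mem_toList, Set.Finite.mem_toFinset] at ht'
        exact ht'
      exact fun hcc => (hf t' hra).2 hcc
    obtain ⟨t', hra, hAnd⟩ := Q_a hQ _ hχ
    rw [sat_bigAnd] at hAnd
    refine absurd ((hf t' hra).1) (hAnd (.neg (f t')) ?_)
    refine List.mem_map.2 ⟨t', ?_, rfl⟩
    rw [Finset.mem_toList, Set.Finite.mem_toFinset]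
    exact hra
  · intro t' ht'
    by_contra hcon
    push_neg at hcon
    have key : ∀ s' : σ, ∃ φ : HML Act, M.Ra s α s' →
        Sat M φ .c t' ∧ ¬ Sat (LTS M.Ra) φ .c s' := by
      intro s'
      by_cases h : M.Ra s α s'
      · have h2 := hcon s' h
        obtain ⟨φ, h1, h2⟩ := h2
        exact ⟨φ, fun _ => ⟨h1, h2⟩⟩
      · exact ⟨.tt, fun hh => absurd hh h⟩
    choose g hg using key
    have hχ : Sat M (HML.dia α
        (.bigAnd ((((hMf s α).1.toFinset).toList).map g))) .c t := by
      refine ⟨t', ht', ?_⟩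
      rw [sat_bigAnd]
      rintro ψ hψ
      simp only [List.mem_map] at hψ
      obtain ⟨s', hs', rfl⟩ := hψ
      have hra : M.Ra s α s' := by
        rw [Finset.mem_toList, Set.Finite.mem_toFinset] at hs'
        exact hs'
      exact (hg s' hra).1
    obtain ⟨s', hra, hAnd⟩ := hQ _ hχ
    rw [sat_bigAnd] at hAnd
    refine absurd (hAnd (g s') ?_) (hg s' hra).2
    refine List.mem_map.2 ⟨s', ?_, rfl⟩
    rw [Finset.mem_toList, Set.Finite.mem_toFinset]
    exact hra

/-- `Rc`-paths labelled by a word. -/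
def ReachW (M : MTS Act σ) : List Act → σ → σ → Prop
  | [], s, t => s = t
  | α :: w, s, t => ∃ s₁, M.Rc s α s₁ ∧ ReachW M w s₁ t

theorem reachW_snoc {M : MTS Act σ} {α : Act} {s s' : σ} :
    ∀ (w : List Act) (i : σ), ReachW M w i s → M.Rc s α s' → ReachW M (w ++ [α]) i s' := by
  intro w
  induction w with
  | nil =>
      rintro i rfl h
      exact ⟨s', h, rfl⟩
  | cons δ w ih =>
      rintro i ⟨s₁, h1, h2⟩ h
      exact ⟨s₁, h1, ih s₁ h2 h⟩

theorem sat_psi_of_reach {M : MTS Act σ} {α : Act} {p : MPA Act} :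
    ∀ (w : List Act) (i s : σ), Sat M (psiForm w α p) .a i → ReachW M w i s →
      Sat M (HML.orf (.dia α (charForm p)) (.neg (.dia α (charForm p)))) .a s := by
  intro w
  induction w with
  | nil =>
      rintro i s h rfl
      exact h
  | cons δ w ih =>
      rintro i s h ⟨s₁, h1, h2⟩
      have : Sat M (HML.box δ (psiForm w α p)) .a i := h
      rw [sat_box] at this
      exact ih s₁ s (this s₁ h1) h2

theorem sat_c_psi {M : MTS Act σ} (hM : M.IsModal) :
    ∀ (w : List Act) (α : Act) (p : MPA Act) (s : σ), Sat M (psiForm w α p) .c s := by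
  intro w
  induction w with
  | nil =>
      intro α p s
      rw [show psiForm [] α p =
        HML.orf (.dia α (charForm p)) (.neg (.dia α (charForm p))) from rfl, sat_orf]
      by_cases h : Sat M (.dia α (charForm p)) .a s
      · exact Or.inl (sat_mono M hM _ s h)
      · exact Or.inr h
  | cons δ w ih =>
      intro α p s
      rw [show psiForm (δ :: w) α p = HML.box δ (psiForm w α p) from rfl, sat_box]
      exact fun s' _ => ih α p s'

theorem iii_to_ii {M : MTS Act σ} (hM : M.IsModal) (hMf : M.ImageFinite) (i : σ)
    (hIII : ∀ (w : List Act) (α : Act) (p : MPA Act), Sat M (psiForm w α p) .a i) :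
    ∀ φ : HML Act, ∀ (w : List Act) (s : σ), ReachW M w i s →
      Sat M φ .c s → Sat M φ .a s := by
  intro φ
  induction φ with
  | tt => intro w s _ _; trivial
  | neg φ ih => exact fun w s hre h hc => h (ih w s hre hc)
  | dia α φ ih =>
      rintro w s hre ⟨s', hrc, hs'⟩
      have hre' : ReachW M (w ++ [α]) i s' := reachW_snoc w i hre hrc
      have haφ : Sat M φ .a s' := ih (w ++ [α]) s' hre' hs'
      have hcore := sat_psi_of_reach w i s (hIII w α (unfoldT M hMf φ.depth s')) hre
      rw [sat_orf] at hcore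
      rcases hcore with h | h
      · obtain ⟨s'', hra, hcf⟩ := h
        exact ⟨s'', hra, (transfer hM hMf φ φ.depth s' s'' le_rfl hcf).1 haφ⟩
      · exact absurd ⟨s', hrc, sat_c_charForm_unfold hM hMf φ.depth s'⟩ h
  | and φ ψ ihφ ihψ =>
      rintro w s hre ⟨h1, h2⟩
      exact ⟨ihφ w s hre h1, ihψ w s hre h2⟩

end Aux

/-- For an image-finite pointed modal transition system `(M,i)` the
following are equivalent: (i) `(M,i)` is refinement-equivalent to some pointed
labelled transition system; (ii) `(M,i) ⊨ᶜ φ` implies `(M,i) ⊨ᵃ φ` for every HML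
formula `φ`; (iii) `(M,i) ⊨ᵃ ψ` for every `ψ ∈ Φ`. -/
theorem equivalent_characterizations_of_LTS_like {Act σ : Type}
    [Fintype Act] [DecidableEq Act]
    (M : MTS Act σ) (hM : M.IsModal) (hMf : M.ImageFinite) (i : σ) :
    ((∃ (T : Type) (R : T → Act → T → Prop) (l : T),
        Refines M i (LTS R) l ∧ Refines (LTS R) l M i) ↔
      (∀ φ : HML Act, Sat M φ .c i → Sat M φ .a i)) ∧
    ((∀ φ : HML Act, Sat M φ .c i → Sat M φ .a i) ↔
      (∀ (w : List Act) (α : Act) (p : MPA Act), Sat M (psiForm w α p) .a i)) := by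
  constructor
  · constructor
    · rintro ⟨T, R, l, -, ⟨Q, hQ, hQli⟩⟩ φ hc
      have h2 := Aux.refinement_sound hQ φ l i hQli
      exact h2.1 (Aux.sat_lts_mode R φ .c .a l (h2.2 hc))
    · intro hii
      refine ⟨σ, M.Ra, i, ⟨Eq, ?_, rfl⟩, ?_⟩
      · rintro s t rfl α
        exact ⟨fun s' h => ⟨s', h, rfl⟩, fun t' h => ⟨t', hM _ _ _ h, rfl⟩⟩
      · refine ⟨fun s t => ∀ φ : HML Act, Sat M φ .c t → Sat (LTS M.Ra) φ .c s,
          Aux.construct hM hMf, ?_⟩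
        intro φ hc
        exact Aux.sat_lts_mode M.Ra φ .a .c i ((Aux.sat_toLTS M hM φ i).1 (hii φ hc))
  · constructor
    · intro hii w α p
      exact hii _ (Aux.sat_c_psi hM w α p i)
    · intro hIII φ
      exact Aux.iii_to_ii hM hMf i hIII φ [] i rfl
end

section
/- Let (M,i) be an image-finite pointed modal transition system over a finite event set Act such that for every Hennessy–Milner logic formula φ, (M,i) ⊨ᶜ φ implies (M,i) ⊨ᵃ φ. Then for every image-finite pointed modal transition system (N,j) with (M,i) ⪯ (N,j), also (N,j) ⪯ (M,i); that is, (M,i) is maximal with respect to refinement up to refinement equivalence. -/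
open Classical in
lemma sat_a_to_c_aux {Act σ : Type} (M : MTS Act σ) (hM : M.IsModal) :
    ∀ (φ : HML Act) (s : σ), Sat M φ .a s → Sat M φ .c s := by
  intro φ
  induction φ with
  | tt => intro s _; trivial
  | neg φ ih =>
      intro s hs hc
      exact hs (ih s hc)
  | dia α φ ih =>
      rintro s ⟨s', hR, hφ⟩
      exact ⟨s', hM _ _ _ hR, ih s' hφ⟩
  | and φ ψ ihφ ihψ =>
      rintro s ⟨h1, h2⟩
      exact ⟨ihφ s h1, ihψ s h2⟩

lemma sat_refine_aux {Act σ τ : Type} {M : MTS Act σ} {N : MTS Act τ}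
    {Q : σ → τ → Prop} (hQ : IsRefinement M N Q) :
    ∀ (φ : HML Act) (s : σ) (t : τ), Q s t →
      (Sat M φ .a s → Sat N φ .a t) ∧ (Sat N φ .c t → Sat M φ .c s) := by
  intro φ
  induction φ with
  | tt => intro s t _; exact ⟨fun _ => trivial, fun _ => trivial⟩
  | neg φ ih =>
      intro s t hst
      refine ⟨fun h hc => h ((ih s t hst).2 hc), fun h ha => h ((ih s t hst).1 ha)⟩
  | dia α φ ih =>
      intro s t hst
      constructor
      · rintro ⟨s', hR, hφ⟩
        obtain ⟨t', hR', hQ'⟩ := (hQ s t hst α).1 s' hR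
        exact ⟨t', hR', (ih s' t' hQ').1 hφ⟩
      · rintro ⟨t', hR, hφ⟩
        obtain ⟨s', hR', hQ'⟩ := (hQ s t hst α).2 t' hR
        exact ⟨s', hR', (ih s' t' hQ').2 hφ⟩
  | and φ ψ ihφ ihψ =>
      intro s t hst
      constructor
      · rintro ⟨h1, h2⟩
        exact ⟨(ihφ s t hst).1 h1, (ihψ s t hst).1 h2⟩
      · rintro ⟨h1, h2⟩
        exact ⟨(ihφ s t hst).2 h1, (ihψ s t hst).2 h2⟩

lemma sat_bigAnd_aux {Act σ : Type} (M : MTS Act σ) (m : RMode) (s : σ) :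
    ∀ l : List (HML Act), Sat M (HML.bigAnd l) m s ↔ ∀ φ ∈ l, Sat M φ m s := by
  intro l
  induction l with
  | nil => simp [HML.bigAnd, Sat]
  | cons φ l ih => simp [HML.bigAnd, Sat, ih]

open Classical in
lemma completeness_aux {Act σ τ : Type} (M : MTS Act σ) (N : MTS Act τ)
    (hMf : M.ImageFinite) (hNf : N.ImageFinite) :
    IsRefinement N M (fun t s =>
      (∀ φ : HML Act, Sat N φ .a t → Sat M φ .a s) ∧
      (∀ φ : HML Act, Sat M φ .c s → Sat N φ .c t)) := by
  intro t s hts α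
  constructor
  · -- must transitions of N matched by must transitions of M
    intro t' hR
    by_contra hcon
    push_neg at hcon
    have key : ∀ s', M.Ra s α s' → ∃ φ : HML Act, Sat N φ .a t' ∧ ¬ Sat M φ .a s' := by
      intro s' hR'
      have hfail := hcon s' hR'
      by_cases hA : ∀ φ : HML Act, Sat N φ .a t' → Sat M φ .a s'
      · have hB : ¬ ∀ φ : HML Act, Sat M φ .c s' → Sat N φ .c t' := fun hB => by obtain ⟨φ, h3, h4⟩ := hfail hA; exact h4 (hB φ h3)
        push_neg at hB
        obtain ⟨φ, hc, hnc⟩ := hB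
        exact ⟨.neg φ, hnc, fun hn => hn hc⟩
      · push_neg at hA
        exact hA
    have hS := (hMf s α).1
    set f : σ → HML Act := fun s' => if h : M.Ra s α s' then (key s' h).choose else .tt with hf
    set ψ : HML Act := HML.bigAnd (hS.toFinset.toList.map f) with hψ
    have hNψ : Sat N ψ .a t' := by
      rw [hψ, sat_bigAnd_aux]
      intro φ hφ
      simp only [List.mem_map] at hφ
      obtain ⟨s', hs', rfl⟩ := hφ
      rw [Finset.mem_toList, Set.Finite.mem_toFinset] at hs'
      have hR' : M.Ra s α s' := hs'
      simp only [hf, dif_pos hR']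
      exact (key s' hR').choose_spec.1
    have hMdia : Sat M (.dia α ψ) .a s := (hts.1 (.dia α ψ)) ⟨t', hR, hNψ⟩
    obtain ⟨s'', hR'', hψ''⟩ := hMdia
    have hR2 : M.Ra s α s'' := hR''
    have hmem : f s'' ∈ hS.toFinset.toList.map f := by
      apply List.mem_map_of_mem
      rw [Finset.mem_toList, Set.Finite.mem_toFinset]
      exact hR2
    have := (sat_bigAnd_aux M .a s'' _).1 hψ'' _ hmem
    simp only [hf, dif_pos hR2] at this
    exact (key s'' hR2).choose_spec.2 this
  · -- may transitions of M matched by may transitions of N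
    intro s' hRc
    by_contra hcon
    push_neg at hcon
    have key : ∀ t', N.Rc t α t' → ∃ φ : HML Act, Sat M φ .c s' ∧ ¬ Sat N φ .c t' := by
      intro t' hR'
      have hfail := hcon t' hR'
      by_cases hA : ∀ φ : HML Act, Sat N φ .a t' → Sat M φ .a s'
      · have hB : ¬ ∀ φ : HML Act, Sat M φ .c s' → Sat N φ .c t' := fun hB => by obtain ⟨φ, h3, h4⟩ := hfail hA; exact h4 (hB φ h3)
        push_neg at hB
        exact hB
      · push_neg at hA
        obtain ⟨φ, ha, hna⟩ := hA
        exact ⟨.neg φ, hna, fun hn => hn ha⟩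
    have hT := (hNf t α).2
    set f : τ → HML Act := fun t' => if h : N.Rc t α t' then (key t' h).choose else .tt with hf
    set ψ : HML Act := HML.bigAnd (hT.toFinset.toList.map f) with hψ
    have hMψ : Sat M ψ .c s' := by
      rw [hψ, sat_bigAnd_aux]
      intro φ hφ
      simp only [List.mem_map] at hφ
      obtain ⟨t', ht', rfl⟩ := hφ
      rw [Finset.mem_toList, Set.Finite.mem_toFinset] at ht'
      have hR' : N.Rc t α t' := ht'
      simp only [hf, dif_pos hR']
      exact (key t' hR').choose_spec.1
    have hNdia : Sat N (.dia α ψ) .c t := (hts.2 (.dia α ψ)) ⟨s', hRc, hMψ⟩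
    obtain ⟨t'', hR'', hψ''⟩ := hNdia
    have hR2 : N.Rc t α t'' := hR''
    have hmem : f t'' ∈ hT.toFinset.toList.map f := by
      apply List.mem_map_of_mem
      rw [Finset.mem_toList, Set.Finite.mem_toFinset]
      exact hR2
    have := (sat_bigAnd_aux N .c t'' _).1 hψ'' _ hmem
    simp only [hf, dif_pos hR2] at this
    exact (key t'' hR2).choose_spec.2 this

/-- If the image-finite pointed modal transition system `(M,i)`
satisfies `(M,i) ⊨ᶜ φ → (M,i) ⊨ᵃ φ` for every HML formula `φ`, then `(M,i)` is
maximal with respect to refinement up to refinement equivalence: any image-finite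
pointed modal transition system refining `(M,i)` also refines back. -/
theorem maximal_of_sat_c_implies_sat_a {Act σ : Type} [Fintype Act]
    (M : MTS Act σ) (hM : M.IsModal) (hMf : M.ImageFinite) (i : σ)
    (h : ∀ φ : HML Act, Sat M φ .c i → Sat M φ .a i) :
    ∀ (τ : Type) (N : MTS Act τ), N.IsModal → N.ImageFinite →
      ∀ j : τ, Refines M i N j → Refines N j M i := by
  intro τ N hN hNf j hMN
  obtain ⟨Q, hQ, hQij⟩ := hMN
  refine ⟨fun t s =>
      (∀ φ : HML Act, Sat N φ .a t → Sat M φ .a s) ∧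
      (∀ φ : HML Act, Sat M φ .c s → Sat N φ .c t),
    completeness_aux M N hMf hNf, ?_, ?_⟩
  · intro φ hφ
    exact h φ ((sat_refine_aux hQ φ i j hQij).2 (sat_a_to_c_aux N hN φ j hφ))
  · intro φ hφ
    exact sat_a_to_c_aux N hN φ j ((sat_refine_aux hQ φ i j hQij).1 (h φ hφ))
end
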